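/- The map sending n : ℤ to the homotopy class of the loop t ↦ exp(2πint) is a group homomorphism from ℤ to π₁(S¹, 1). -/

import Mathlib

attribute [local instance] Path.Homotopic.setoid

/-- The loop on the circle winding `n` times. -/
noncomputable def circleLoop (n : ℤ) : Path (1 : Circle) 1 where
  toFun t := Circle.exp (2 * Real.pi * n * t)
  continuous_toFun := by fun_prop
  source' := by simp
  target' := by
    show Circle.exp (2 * Real.pi * n * ((1 : unitInterval) : ℝ)) = 1
    rw [show ((1 : unitInterval) : ℝ) = 1 from rfl, mul_one, ← Circle.exp_zero, Circle.exp_eq_exp]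
    exact ⟨n, by push_cast; ring⟩

noncomputable def seg (a b : ℝ) : Path a b where
  toFun t := a + (b - a) * t
  continuous_toFun := by fun_prop
  source' := by simp
  target' := by simp

noncomputable def expMap : C(ℝ, Circle) :=
  ⟨fun x => Circle.exp (2 * Real.pi * x), by fun_prop⟩

lemma expMap_int (k : ℤ) : expMap (k : ℝ) = 1 := by
  show Circle.exp _ = 1
  rw [← Circle.exp_zero, Circle.exp_eq_exp]
  exact ⟨k, by push_cast; ring⟩

lemma homotopic_cast {X : Type*} [TopologicalSpace X] {x y x' y' : X} (hx : x' = x)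
    (hy : y' = y) {p q : Path x y} (h : p.Homotopic q) :
    (p.cast hx hy).Homotopic (q.cast hx hy) := by
  subst hx; subst hy
  have hp : p.cast rfl rfl = p := by ext t; rfl
  have hq : q.cast rfl rfl = q := by ext t; rfl
  rwa [hp, hq]

lemma key (m n : ℤ) : (circleLoop (m + n)).Homotopic ((circleLoop m).trans (circleLoop n)) := by
  have h0 : expMap (0 : ℝ) = 1 := by simpa using expMap_int 0
  have hmn : expMap ((m : ℝ) + n) = 1 := by
    have := expMap_int (m + n); push_cast at this; simpa using this
  set p : Path (0 : ℝ) ((m : ℝ) + n) := seg 0 ((m : ℝ) + n) with hp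
  set q : Path (0 : ℝ) ((m : ℝ) + n) := (seg 0 (m : ℝ)).trans (seg (m : ℝ) ((m : ℝ) + n)) with hq
  have hpq : p.Homotopic q := SimplyConnectedSpace.paths_homotopic p q
  have hmap := Path.Homotopic.map hpq expMap
  have hmap' := homotopic_cast h0.symm hmn.symm hmap
  have e1 : (p.map expMap.continuous).cast h0.symm hmn.symm = circleLoop (m + n) := by
    ext t
    have h : Circle.exp (2 * Real.pi * (0 + (((m : ℝ) + n) - 0) * t)) = Circle.exp (2 * Real.pi * ((m + n : ℤ) : ℝ) * t) := by
      push_cast; ring_nf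
    exact congrArg Subtype.val h
  have e2 : (q.map expMap.continuous).cast h0.symm hmn.symm = (circleLoop m).trans (circleLoop n) := by
    ext t
    have h : expMap (q t) = ((circleLoop m).trans (circleLoop n)) t := by
      rw [hq, Path.trans_apply, Path.trans_apply]
      split_ifs with h
      · show Circle.exp (2 * Real.pi * (0 + ((m : ℝ) - 0) * _)) = Circle.exp (2 * Real.pi * (m : ℝ) * _)
        ring_nf
      · show Circle.exp (2 * Real.pi * ((m : ℝ) + (((m : ℝ) + n) - m) * _)) = Circle.exp (2 * Real.pi * (n : ℝ) * _)
        rw [Circle.exp_eq_exp]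
        exact ⟨m, by push_cast; ring⟩
    exact congrArg Subtype.val h
  rw [← e1, ← e2]
  exact hmap'

theorem loop_class_hom (m n : ℤ) :
    (FundamentalGroup.fromPath (X := TopCat.of Circle) ⟦circleLoop (m + n)⟧ :
        FundamentalGroup Circle 1) =
      FundamentalGroup.fromPath (X := TopCat.of Circle) ⟦circleLoop m⟧ *
        FundamentalGroup.fromPath (X := TopCat.of Circle) ⟦circleLoop n⟧ := by
  show (⟦circleLoop (m + n)⟧ : Path.Homotopic.Quotient (1 : Circle) 1) =
    Path.Homotopic.Quotient.trans (⟦circleLoop n⟧ : Path.Homotopic.Quotient (1 : Circle) 1) ⟦circleLoop m⟧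
  rw [add_comm m n]
  exact Quotient.sound (key n m)
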